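/- (Lemma 1, pure VIO under pure translational straight-line motion.) Let R_GI and R_IC be real 3×3 rotation matrices, d, p_f, p₁, p_k, v₁, g ∈ ℝ³, δt ∈ ℝ, and let Φ₁₂, Φ₅₂ be arbitrary real 3×3 matrices. Assume the straight-line constraint: there exists q ∈ ℝ³ with q ×₃ d = 0 and p_k = p₁ + R_GI.mulVec q. Then the block matrix–vector product Ξ · N₁ equals 0 ∈ ℝ³, where Ξ = [Γ₁, Γ₂, −δt•1, Γ₃, −1, Γ₄, 1] acts blockwise on N₁ = (0, 0, 0, 0, 0, R_IC.mulVec d, −S(p_f − p₁).mulVec (R_GI.mulVec d)); explicitly, Γ₁.mulVec 0 + Γ₂.mulVec 0 + (−δt)•0 + Γ₃.mulVec 0 + (−1)•0 + Γ₄.mulVec (R_IC.mulVec d) + (−S(p_f − p₁).mulVec (R_GI.mulVec d)) = 0, i.e., Γ₄.mulVec (R_IC.mulVec d) = S(p_f − p₁).mulVec (R_GI.mulVec d). -/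

import Mathlib

open Matrix

/-- The skew-symmetric (cross-product) matrix of a vector in ℝ³. -/
def skew (v : Fin 3 → ℝ) : Matrix (Fin 3) (Fin 3) ℝ :=
  !![0, -v 2, v 1; v 2, 0, -v 0; -v 1, v 0, 0]

lemma skew_mulVec (v w : Fin 3 → ℝ) : (skew v).mulVec w = v ⨯₃ w := by
  ext i
  fin_cases i <;>
    simp [skew, Matrix.mulVec, dotProduct, crossProduct, Fin.sum_univ_succ] <;> ring

lemma cross_aux (A : Matrix (Fin 3) (Fin 3) ℝ) (u v : Fin 3 → ℝ) :
    Aᵀ.mulVec ((A.mulVec u) ⨯₃ (A.mulVec v)) = A.det • (u ⨯₃ v) := by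
  ext i
  fin_cases i <;>
    simp [Matrix.mulVec, dotProduct, crossProduct, Fin.sum_univ_succ,
      Matrix.det_fin_three, Matrix.transpose] <;> ring

lemma rot_cross (A : Matrix (Fin 3) (Fin 3) ℝ) (h : Aᵀ * A = 1) (hd : A.det = 1)
    (u v : Fin 3 → ℝ) : (A.mulVec u) ⨯₃ (A.mulVec v) = A.mulVec (u ⨯₃ v) := by
  have h2 : A * Aᵀ = 1 := mul_eq_one_comm.mp h
  have := congrArg (A.mulVec) (cross_aux A u v)
  rw [Matrix.mulVec_smul, Matrix.mulVec_mulVec, h2, Matrix.one_mulVec, hd, one_smul] at this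
  exact this

theorem lemma1_pure_vio_straight_line
    (R_GI R_IC : Matrix (Fin 3) (Fin 3) ℝ)
    (hGI : R_GIᵀ * R_GI = 1) (hGIdet : R_GI.det = 1)
    (hIC : R_ICᵀ * R_IC = 1) (hICdet : R_IC.det = 1)
    (d pf p₁ pk v₁ g : Fin 3 → ℝ) (δt : ℝ)
    (Φ₁₂ Φ₅₂ : Matrix (Fin 3) (Fin 3) ℝ)
    (hline : ∃ q : Fin 3 → ℝ, q ⨯₃ d = 0 ∧ pk = p₁ + R_GI.mulVec q) :
    (skew (pf - p₁ - δt • v₁ + (δt ^ 2 / 2) • g) * R_GI).mulVec 0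
      + (skew (pf - pk) * R_GI * Φ₁₂ - Φ₅₂).mulVec 0
      + (-δt) • (0 : Fin 3 → ℝ)
      + ((δt ^ 2 / 2) • R_GI).mulVec 0
      + (-1 : ℝ) • (0 : Fin 3 → ℝ)
      + (skew (pf - pk) * R_GI * R_ICᵀ).mulVec (R_IC.mulVec d)
      + (-(skew (pf - p₁)).mulVec (R_GI.mulVec d)) = 0
    ∧ (skew (pf - pk) * R_GI * R_ICᵀ).mulVec (R_IC.mulVec d)
        = (skew (pf - p₁)).mulVec (R_GI.mulVec d) := by
  obtain ⟨q, hq, hpk⟩ := hline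
  have key : (skew (pf - pk) * R_GI * R_ICᵀ).mulVec (R_IC.mulVec d)
      = (skew (pf - p₁)).mulVec (R_GI.mulVec d) := by
    have hICd : R_ICᵀ.mulVec (R_IC.mulVec d) = d := by
      rw [Matrix.mulVec_mulVec, hIC, Matrix.one_mulVec]
    rw [← Matrix.mulVec_mulVec, ← Matrix.mulVec_mulVec, hICd, skew_mulVec, skew_mulVec]
    have : pf - pk = (pf - p₁) - R_GI.mulVec q := by
      rw [hpk]; abel
    rw [this, map_sub, LinearMap.sub_apply]
    have : (R_GI.mulVec q) ⨯₃ (R_GI.mulVec d) = 0 := by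
      rw [rot_cross R_GI hGI hGIdet, hq, Matrix.mulVec_zero]
    rw [this, sub_zero]
  refine ⟨?_, key⟩
  simp [key, Matrix.mulVec_zero]
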